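/- arXiv:1603.02594 — 2 statements merged into one kernel-verified Lean document; each statement's English description precedes it below -/
import Mathlib

section
/- The adjoint polynomial is of exponential type: for every finite simple graph G = (V,E) and all x, y, Σ_{S ⊆ V} h(G[S], x) · h(G[V∖S], y) = h(G, x + y), where the sum is over all subsets S of V and h of the empty graph is 1. -/
open scoped Classical

noncomputable section

/-- The collection of (unordered) partitions of the finite set `S` into exactly `k`
nonempty parts, encoded as finsets of pairwise disjoint nonempty finsets whose union
is `S`. -/
def partitionsInto {V : Type*} [Fintype V] (S : Finset V) (k : ℕ) :
    Finset (Finset (Finset V)) :=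
  Finset.univ.filter (fun P : Finset (Finset V) =>
    P.card = k ∧ (∀ T ∈ P, T.Nonempty) ∧
      (P : Set (Finset V)).PairwiseDisjoint id ∧ P.sup id = S)

/-- `a_k(G)`: the number of partitions of the vertex set of `G` into exactly `k`
nonempty parts, each of which induces a clique of `G`. -/
def cliquePartCount {V : Type*} [Fintype V] (G : SimpleGraph V) (k : ℕ) : ℕ :=
  ((partitionsInto (Finset.univ : Finset V) k).filter
    (fun P => ∀ T : Finset V, T ∈ P → G.IsClique (↑T : Set V))).card

/-- The adjoint polynomial (with alternating signs)
`h(G,x) = ∑_{k=1}^n (-1)^{n-k} a_k(G) x^k`; the `k = 0` term is nonzero only for the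
empty graph, where it realizes the convention `h(∅) = 1`. -/
def adjointPoly {V : Type*} [Fintype V] (G : SimpleGraph V) (x : ℂ) : ℂ :=
  ∑ k ∈ Finset.range (Fintype.card V + 1),
    (-1 : ℂ) ^ (Fintype.card V - k) * (cliquePartCount G k : ℂ) * x ^ k

/-- All clique partitions of the finset `S` (of any size). -/
def cliqueParts {V : Type*} [Fintype V] (G : SimpleGraph V) (S : Finset V) :
    Finset (Finset (Finset V)) :=
  Finset.univ.filter (fun P : Finset (Finset V) =>
    (∀ T ∈ P, T.Nonempty) ∧ (P : Set (Finset V)).PairwiseDisjoint id ∧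
      P.sup id = S ∧ ∀ T ∈ P, G.IsClique (↑T : Set V))

lemma mem_cliqueParts {V : Type*} [Fintype V] {G : SimpleGraph V} {S : Finset V}
    {P : Finset (Finset V)} :
    P ∈ cliqueParts G S ↔ (∀ T ∈ P, T.Nonempty) ∧
      (P : Set (Finset V)).PairwiseDisjoint id ∧
      P.sup id = S ∧ ∀ T ∈ P, G.IsClique (↑T : Set V) := by
  simp [cliqueParts]

lemma subset_of_mem_of_mem_cliqueParts {V : Type*} [Fintype V] {G : SimpleGraph V}
    {S : Finset V} {P : Finset (Finset V)} (hP : P ∈ cliqueParts G S)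
    {T : Finset V} (hT : T ∈ P) : T ⊆ S := by
  rw [mem_cliqueParts] at hP
  exact hP.2.2.1 ▸ Finset.le_sup (f := id) hT

lemma card_le_of_mem_cliqueParts {V : Type*} [Fintype V] {G : SimpleGraph V}
    {S : Finset V} {P : Finset (Finset V)} (hP : P ∈ cliqueParts G S) :
    P.card ≤ S.card := by
  rw [mem_cliqueParts] at hP
  obtain ⟨hne, hdisj, hsup, -⟩ := hP
  have h1 : S = P.biUnion id := by
    rw [← hsup, Finset.sup_eq_biUnion]
  have h2 : S.card = ∑ T ∈ P, T.card := by
    rw [h1, Finset.card_biUnion (fun a ha b hb hab => hdisj ha hb hab)]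
    rfl
  rw [h2]
  calc P.card = ∑ T ∈ P, 1 := by simp
    _ ≤ ∑ T ∈ P, T.card := Finset.sum_le_sum fun T hT => Finset.card_pos.2 (hne T hT)

/-- Sign-unified polynomial over clique partitions. -/
def hpoly {V : Type*} [Fintype V] (G : SimpleGraph V) (S : Finset V) (x : ℂ) : ℂ :=
  ∑ P ∈ cliqueParts G S, (-1 : ℂ) ^ (S.card - P.card) * x ^ P.card

lemma hpoly_eq_sum_range {V : Type*} [Fintype V] (G : SimpleGraph V) (S : Finset V)
    (x : ℂ) :
    hpoly G S x = ∑ k ∈ Finset.range (S.card + 1),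
      (-1 : ℂ) ^ (S.card - k) * (((cliqueParts G S).filter (fun P => P.card = k)).card : ℂ)
        * x ^ k := by
  rw [hpoly, ← Finset.sum_fiberwise_of_maps_to (g := Finset.card)
    (fun P hP => Finset.mem_range.2 (Nat.lt_succ_of_le (card_le_of_mem_cliqueParts hP)))]
  refine Finset.sum_congr rfl fun k _ => ?_
  have hcongr : ∀ P ∈ (cliqueParts G S).filter (fun P => P.card = k),
      (-1 : ℂ) ^ (S.card - P.card) * x ^ P.card = (-1 : ℂ) ^ (S.card - k) * x ^ k := by
    intro P hP
    rw [(Finset.mem_filter.1 hP).2]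
  rw [Finset.sum_congr rfl hcongr, Finset.sum_const, nsmul_eq_mul]
  ring

lemma cliquePartCount_eq {V : Type*} [Fintype V] (G : SimpleGraph V) (k : ℕ) :
    cliquePartCount G k
      = ((cliqueParts G Finset.univ).filter (fun P => P.card = k)).card := by
  have : (partitionsInto (Finset.univ : Finset V) k).filter
      (fun P => ∀ T : Finset V, T ∈ P → G.IsClique (↑T : Set V))
      = (cliqueParts G Finset.univ).filter (fun P => P.card = k) := by
    ext P
    simp only [partitionsInto, cliqueParts, Finset.mem_filter, Finset.mem_univ, true_and]
    tauto
  rw [cliquePartCount, this]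

lemma adjointPoly_eq_hpoly_univ {V : Type*} [Fintype V] (G : SimpleGraph V) (x : ℂ) :
    adjointPoly G x = hpoly G Finset.univ x := by
  rw [hpoly_eq_sum_range, adjointPoly, Finset.card_univ]
  refine Finset.sum_congr rfl fun k _ => ?_
  rw [cliquePartCount_eq]

section Induce
variable {V : Type*} [Fintype V] (G : SimpleGraph V) (S : Finset V)

private def eimg : Finset (↑S : Set V) → Finset V := fun T => T.image Subtype.val

lemma eimg_injective : Function.Injective (eimg S) :=
  Finset.image_injective Subtype.val_injective

lemma sup_eimg (Q : Finset (Finset (↑S : Set V))) :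
    Q.sup (eimg S) = eimg S (Q.sup id) := by
  induction Q using Finset.induction with
  | empty => simp [eimg]
  | insert _ _ h ih => simp [Finset.sup_insert, ih, eimg, Finset.image_union]

lemma isClique_eimg (T : Finset (↑S : Set V)) :
    (G.induce (↑S : Set V)).IsClique (↑T : Set (↑S : Set V))
      ↔ G.IsClique (↑(eimg S T) : Set V) := by
  rw [eimg, Finset.coe_image, SimpleGraph.IsClique, SimpleGraph.IsClique,
    Set.InjOn.pairwise_image (Subtype.val_injective.injOn)]
  rfl

lemma key_iff (Q : Finset (Finset (↑S : Set V))) :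
    Q ∈ cliqueParts (G.induce (↑S : Set V)) Finset.univ
      ↔ Q.image (eimg S) ∈ cliqueParts G S := by
  rw [mem_cliqueParts, mem_cliqueParts]
  constructor
  · rintro ⟨hne, hdisj, hsup, hcl⟩
    refine ⟨?_, ?_, ?_, ?_⟩
    · intro T' hT'
      obtain ⟨T, hT, rfl⟩ := Finset.mem_image.1 hT'
      exact (Finset.image_nonempty).2 (hne T hT)
    · intro A hA B hB hAB
      simp only [Finset.coe_image, Set.mem_image, Finset.mem_coe] at hA hB
      obtain ⟨a, ha, rfl⟩ := hA
      obtain ⟨b, hb, rfl⟩ := hB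
      have hab : a ≠ b := fun h => hAB (by rw [h])
      exact (Finset.disjoint_image Subtype.val_injective).2 (hdisj ha hb hab)
    · rw [Finset.sup_image, Function.id_comp, sup_eimg]
      have h' : Q.sup id = Finset.univ := by convert hsup
      rw [h']
      simp [eimg]
    · intro T' hT'
      obtain ⟨T, hT, rfl⟩ := Finset.mem_image.1 hT'
      exact (isClique_eimg G S T).1 (hcl T hT)
  · rintro ⟨hne, hdisj, hsup, hcl⟩
    refine ⟨?_, ?_, ?_, ?_⟩
    · intro T hT
      have := hne _ (Finset.mem_image_of_mem (eimg S) hT)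
      rw [eimg, Finset.image_nonempty] at this
      exact this
    · intro a ha b hb hab
      have := hdisj (Finset.mem_coe.2 (Finset.mem_image_of_mem (eimg S) (Finset.mem_coe.1 ha)))
        (Finset.mem_coe.2 (Finset.mem_image_of_mem (eimg S) (Finset.mem_coe.1 hb)))
        (fun h => hab (eimg_injective S h))
      exact (Finset.disjoint_image Subtype.val_injective).1 this
    · rw [Finset.sup_image, Function.id_comp, sup_eimg] at hsup
      refine eimg_injective S ?_
      have h2 : eimg S (Finset.univ : Finset (↑S : Set V)) = S := by simp [eimg]
      rw [h2]
      convert hsup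
    · intro T hT
      exact (isClique_eimg G S T).2 (hcl _ (Finset.mem_image_of_mem (eimg S) hT))

lemma cliquePartCount_induce {V : Type*} [Fintype V] (G : SimpleGraph V) (S : Finset V)
    (k : ℕ) :
    cliquePartCount (G.induce (↑S : Set V)) k
      = ((cliqueParts G S).filter (fun P => P.card = k)).card := by
  rw [cliquePartCount_eq]
  apply Finset.card_nbij (i := fun Q => Q.image (eimg S))
  · intro Q hQ
    rw [Finset.mem_coe, Finset.mem_filter] at hQ ⊢
    exact ⟨(key_iff G S Q).1 hQ.1,
      by rw [Finset.card_image_of_injective _ (eimg_injective S)]; exact hQ.2⟩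
  · exact fun a _ b _ h => Finset.image_injective (eimg_injective S) h
  · intro P' hP'
    rw [Finset.coe_filter, Set.mem_setOf_eq] at hP'
    obtain ⟨hP'1, hP'2⟩ := hP'
    set pre : Finset V → Finset (↑S : Set V) :=
      fun T' => T'.preimage Subtype.val Subtype.val_injective.injOn with hpre
    have himg : ∀ T' ∈ P', eimg S (pre T') = T' := by
      intro T' hT'
      rw [eimg, hpre, Finset.image_preimage]
      simp only [Subtype.range_coe_subtype]
      rw [Finset.filter_true_of_mem]
      intro a ha
      exact subset_of_mem_of_mem_cliqueParts hP'1 hT' ha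
    have hQP : (P'.image pre).image (eimg S) = P' := by
      rw [Finset.image_image]
      have : ∀ T' ∈ P', (eimg S ∘ pre) T' = id T' := himg
      rw [Finset.image_congr this, Finset.image_id]
    refine ⟨P'.image pre, ?_, hQP⟩
    rw [Finset.mem_coe, Finset.mem_filter]
    constructor
    · rw [key_iff, hQP]
      exact hP'1
    · have h1 : (P'.image pre).card ≤ P'.card := Finset.card_image_le
      have h2 : P'.card ≤ (P'.image pre).card := by
        conv_lhs => rw [← hQP]
        exact Finset.card_image_le
      omega
end Induce


lemma adjointPoly_induce_eq_hpoly {V : Type*} [Fintype V] (G : SimpleGraph V)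
    (S : Finset V) (x : ℂ) :
    adjointPoly (G.induce (↑S : Set V)) x = hpoly G S x := by
  rw [hpoly_eq_sum_range, adjointPoly]
  have hc : Fintype.card (↑S : Set V) = S.card := by simp
  rw [hc]
  refine Finset.sum_congr rfl fun k _ => ?_
  rw [cliquePartCount_induce]

lemma neg_one_pow_sub (a b : ℕ) (h : b ≤ a) :
    ((-1 : ℂ)) ^ (a - b) = (-1) ^ a * (-1) ^ b := by
  have : ((-1 : ℂ)) ^ (a - b) * ((-1 : ℂ)) ^ b = (-1) ^ a := by
    rw [← pow_add, Nat.sub_add_cancel h]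
  calc ((-1 : ℂ)) ^ (a - b) = ((-1 : ℂ)) ^ (a - b) * ((-1) ^ b * (-1) ^ b) := by
        rw [← pow_add, ← two_mul, pow_mul]; norm_num
    _ = (-1) ^ a * (-1) ^ b := by rw [← mul_assoc, this]

section Main
variable {V : Type*} [Fintype V] {G : SimpleGraph V}

lemma union_mem_cliqueParts {S : Finset V} {P1 P2 : Finset (Finset V)}
    (h1 : P1 ∈ cliqueParts G S) (h2 : P2 ∈ cliqueParts G Sᶜ) :
    P1 ∪ P2 ∈ cliqueParts G Finset.univ := by
  rw [mem_cliqueParts] at h1 h2 ⊢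
  obtain ⟨hne1, hd1, hs1, hc1⟩ := h1
  obtain ⟨hne2, hd2, hs2, hc2⟩ := h2
  refine ⟨?_, ?_, ?_, ?_⟩
  · intro T hT
    rcases Finset.mem_union.1 hT with h | h
    exacts [hne1 T h, hne2 T h]
  · intro a ha b hb hab
    rw [Finset.coe_union, Set.mem_union] at ha hb
    have key : ∀ A B : Finset V, A ∈ P1 → B ∈ P2 → Disjoint (id A) (id B) := by
      intro A B hA hB
      have hAS : A ⊆ S := hs1 ▸ Finset.le_sup (f := id) hA
      have hBS : B ⊆ Sᶜ := hs2 ▸ Finset.le_sup (f := id) hB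
      exact Finset.disjoint_of_subset_left hAS
        (Finset.disjoint_of_subset_right hBS disjoint_compl_right)
    rcases ha with ha | ha <;> rcases hb with hb | hb
    · exact hd1 ha hb hab
    · exact key a b ha hb
    · exact (key b a hb ha).symm
    · exact hd2 ha hb hab
  · rw [Finset.sup_union, hs1, hs2, sup_compl_eq_top, Finset.top_eq_univ]
  · intro T hT
    rcases Finset.mem_union.1 hT with h | h
    exacts [hc1 T h, hc2 T h]

lemma disjoint_of_cliqueParts {S : Finset V} {P1 P2 : Finset (Finset V)}
    (h1 : P1 ∈ cliqueParts G S) (h2 : P2 ∈ cliqueParts G Sᶜ) : Disjoint P1 P2 := by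
  rw [Finset.disjoint_left]
  intro T hT1 hT2
  have hTS : T ⊆ S := subset_of_mem_of_mem_cliqueParts h1 hT1
  have hTSc : T ⊆ Sᶜ := subset_of_mem_of_mem_cliqueParts h2 hT2
  rw [mem_cliqueParts] at h1
  obtain ⟨v, hv⟩ := h1.1 T hT1
  exact (Finset.mem_compl.1 (hTSc hv)) (hTS hv)

lemma subset_mem_cliqueParts {P Q : Finset (Finset V)}
    (hP : P ∈ cliqueParts G Finset.univ) (hQ : Q ⊆ P) :
    Q ∈ cliqueParts G (Q.sup id) := by
  rw [mem_cliqueParts] at hP ⊢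
  exact ⟨fun T hT => hP.1 T (hQ hT),
    hP.2.1.subset (by exact_mod_cast hQ), rfl, fun T hT => hP.2.2.2 T (hQ hT)⟩

lemma sdiff_mem_cliqueParts {P Q : Finset (Finset V)}
    (hP : P ∈ cliqueParts G Finset.univ) (hQ : Q ⊆ P) :
    P \ Q ∈ cliqueParts G ((Q.sup id)ᶜ) := by
  have hsd : P \ Q ⊆ P := Finset.sdiff_subset
  rw [mem_cliqueParts] at hP ⊢
  refine ⟨fun T hT => hP.1 T (hsd hT), hP.2.1.subset (by exact_mod_cast hsd), ?_,
    fun T hT => hP.2.2.2 T (hsd hT)⟩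
  have hco : Q.sup id ⊔ (P \ Q).sup id = ⊤ := by
    rw [← Finset.sup_union, Finset.union_sdiff_of_subset hQ, hP.2.2.1]
    rfl
  have hdis : Disjoint (Q.sup id) ((P \ Q).sup id) := by
    rw [Finset.disjoint_sup_left]
    intro A hA
    rw [Finset.disjoint_sup_right]
    intro B hB
    have hAB : A ≠ B := fun h => (Finset.mem_sdiff.1 hB).2 (h ▸ hA)
    exact hP.2.1 (Finset.mem_coe.2 (hQ hA)) (Finset.mem_coe.2 (hsd hB)) hAB
  have hco' : (P \ Q).sup id ⊔ Q.sup id = ⊤ := by rw [sup_comm]; exact hco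
  exact eq_compl_iff_isCompl.2 ⟨hdis.symm, codisjoint_iff.2 hco'⟩

lemma hpoly_mul_hpoly {V : Type*} [Fintype V] (G : SimpleGraph V) (x y : ℂ) :
    ∑ S : Finset V, hpoly G S x * hpoly G Sᶜ y = hpoly G Finset.univ (x + y) := by
  classical
  have lhs : ∑ S : Finset V, hpoly G S x * hpoly G Sᶜ y
      = ∑ a ∈ (Finset.univ : Finset (Finset V)).sigma
          (fun S => (cliqueParts G S) ×ˢ (cliqueParts G Sᶜ)),
          ((-1 : ℂ) ^ (a.1.card - a.2.1.card) * x ^ a.2.1.card)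
            * ((-1 : ℂ) ^ (a.1ᶜ.card - a.2.2.card) * y ^ a.2.2.card) := by
    rw [Finset.sum_sigma]
    refine Finset.sum_congr rfl fun S _ => ?_
    rw [hpoly, hpoly, Finset.sum_mul_sum, ← Finset.sum_product']
  have rhs : hpoly G Finset.univ (x + y)
      = ∑ b ∈ (cliqueParts G Finset.univ).sigma (fun P => P.powerset),
          (-1 : ℂ) ^ ((Finset.univ : Finset V).card - b.1.card)
            * (x ^ b.2.card * y ^ (b.1 \ b.2).card) := by
    rw [hpoly, Finset.sum_sigma]
    refine Finset.sum_congr rfl fun P _ => ?_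
    have hexp : (x + y) ^ P.card = ∑ Q ∈ P.powerset, x ^ Q.card * y ^ (P \ Q).card := by
      calc (x + y) ^ P.card = ∏ _T ∈ P, (x + y) := by rw [Finset.prod_const]
        _ = ∑ Q ∈ P.powerset, (∏ _T ∈ Q, x) * ∏ _T ∈ P \ Q, y :=
            Finset.prod_add _ _ _
        _ = ∑ Q ∈ P.powerset, x ^ Q.card * y ^ (P \ Q).card := by
            simp [Finset.prod_const]
    rw [hexp, Finset.mul_sum]
  rw [lhs, rhs]
  refine Finset.sum_nbij' (fun a => ⟨a.2.1 ∪ a.2.2, a.2.1⟩)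
    (fun b => ⟨b.2.sup id, (b.2, b.1 \ b.2)⟩) ?_ ?_ ?_ ?_ ?_
  · rintro ⟨S, P1, P2⟩ ha
    rw [Finset.mem_sigma, Finset.mem_product] at ha
    obtain ⟨-, h1, h2⟩ := ha
    rw [Finset.mem_sigma]
    exact ⟨union_mem_cliqueParts h1 h2, Finset.mem_powerset.2 Finset.subset_union_left⟩
  · rintro ⟨P, Q⟩ hb
    rw [Finset.mem_sigma, Finset.mem_powerset] at hb
    obtain ⟨hP, hQ⟩ := hb
    rw [Finset.mem_sigma, Finset.mem_product]
    exact ⟨Finset.mem_univ _, subset_mem_cliqueParts hP hQ, sdiff_mem_cliqueParts hP hQ⟩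
  · rintro ⟨S, P1, P2⟩ ha
    rw [Finset.mem_sigma, Finset.mem_product] at ha
    obtain ⟨-, h1, h2⟩ := ha
    have hs1 : P1.sup id = S := (mem_cliqueParts.1 h1).2.2.1
    have hd : Disjoint P1 P2 := disjoint_of_cliqueParts h1 h2
    simp only [Finset.union_sdiff_cancel_left hd, hs1]
  · rintro ⟨P, Q⟩ hb
    rw [Finset.mem_sigma, Finset.mem_powerset] at hb
    simp only [Finset.union_sdiff_of_subset hb.2]
  · rintro ⟨S, P1, P2⟩ ha
    rw [Finset.mem_sigma, Finset.mem_product] at ha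
    obtain ⟨-, h1, h2⟩ := ha
    have hd : Disjoint P1 P2 := disjoint_of_cliqueParts h1 h2
    have hcard : (P1 ∪ P2).card = P1.card + P2.card := Finset.card_union_of_disjoint hd
    have hc1 : P1.card ≤ S.card := card_le_of_mem_cliqueParts h1
    have hc2 : P2.card ≤ Sᶜ.card := card_le_of_mem_cliqueParts h2
    have hSn : S.card + Sᶜ.card = (Finset.univ : Finset V).card := by
      rw [Finset.card_add_card_compl, Finset.card_univ]
    simp only [Finset.union_sdiff_cancel_left hd, hcard]
    rw [neg_one_pow_sub _ _ hc1, neg_one_pow_sub _ _ hc2,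
      neg_one_pow_sub _ _ (by omega : P1.card + P2.card ≤ (Finset.univ : Finset V).card),
      ← hSn, pow_add, pow_add]
    ring
end Main


/-- the adjoint polynomial is of exponential type:
`∑_{S ⊆ V} h(G[S],x) · h(G[V∖S],y) = h(G,x+y)`. -/
theorem adjointPoly_exponential_type {V : Type*} [Fintype V] (G : SimpleGraph V)
    (x y : ℂ) :
    ∑ S : Finset V,
        adjointPoly (G.induce (↑S : Set V)) x * adjointPoly (G.induce (↑(Sᶜ) : Set V)) y
      = adjointPoly G (x + y) := by
  rw [adjointPoly_eq_hpoly_univ, ← hpoly_mul_hpoly G x y]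
  refine Finset.sum_congr rfl fun S _ => ?_
  rw [adjointPoly_induce_eq_hpoly, adjointPoly_induce_eq_hpoly]
end
end

section
/- Let G be a finite simple graph on n vertices and let e = {u,v} be an edge of G. Then the adjoint polynomial satisfies the recursion h(G,x) = h(G−e, x) − h(G∩e, x), where G−e is G with the edge e deleted. -/
open scoped Classical

noncomputable section

/-- `G∩e`: delete `u,v`, add a new vertex `w` (the `none` vertex) adjacent to exactly
those vertices adjacent in `G` to both `u` and `v`. -/
def interContract {V : Type*} (G : SimpleGraph V) (u v : V) :
    SimpleGraph (Option {z : V // z ≠ u ∧ z ≠ v}) :=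
  SimpleGraph.fromRel (fun a b =>
    match a, b with
    | some a, some b => G.Adj a.1 b.1
    | some a, none => G.Adj u a.1 ∧ G.Adj v a.1
    | none, some b => G.Adj u b.1 ∧ G.Adj v b.1
    | none, none => False)

namespace AdjointAux

open Finset

variable {V : Type*}

/-! ### Basic maps between `V` and `Option {z // z ≠ u ∧ z ≠ v}` -/

def fm (u v : V) (z : V) : Option {z : V // z ≠ u ∧ z ≠ v} :=
  if h : z ≠ u ∧ z ≠ v then some ⟨z, h⟩ else none

def gs (u v : V) : Option {z : V // z ≠ u ∧ z ≠ v} → Finset V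
  | none => {u, v}
  | some z => {z.1}

lemma mem_gs_none {u v a : V} : a ∈ gs u v none ↔ a = u ∨ a = v := by simp [gs]

lemma mem_gs_some {u v a : V} {z} : a ∈ gs u v (some z) ↔ a = z.1 := by simp [gs]

lemma fm_of_ne {u v a : V} (h : a ≠ u ∧ a ≠ v) : fm u v a = some ⟨a, h⟩ := dif_pos h

lemma fm_eq_none {u v a : V} (h : ¬(a ≠ u ∧ a ≠ v)) : fm u v a = none := dif_neg h

lemma mem_gs_fm (u v a : V) : a ∈ gs u v (fm u v a) := by
  by_cases h : a ≠ u ∧ a ≠ v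
  · rw [fm_of_ne h, mem_gs_some]
  · rw [fm_eq_none h, mem_gs_none]
    rcases not_and_or.mp h with h | h
    · left; exact not_not.mp h
    · right; exact not_not.mp h

lemma gs_nonempty (u v : V) (s) : (gs u v s).Nonempty := by
  cases s <;> simp [gs]

lemma image_fm_gs (u v : V) (s) : (gs u v s).image (fm u v) = {s} := by
  cases s with
  | none =>
      ext t
      simp only [gs, mem_image, mem_insert, mem_singleton]
      constructor
      · rintro ⟨a, (rfl | rfl), rfl⟩ <;> rw [fm_eq_none (by simp)]
      · rintro rfl; exact ⟨u, Or.inl rfl, fm_eq_none (by simp)⟩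
  | some z => simp [gs, fm_of_ne z.2]

lemma gs_disjoint {u v : V} {s t} (h : s ≠ t) : Disjoint (gs u v s) (gs u v t) := by
  rw [Finset.disjoint_left]
  intro a has hat
  cases s with
  | none =>
      cases t with
      | none => exact h rfl
      | some z =>
          rw [mem_gs_none] at has; rw [mem_gs_some] at hat
          rcases has with rfl | rfl
          · exact z.2.1 hat.symm
          · exact z.2.2 hat.symm
  | some z =>
      cases t with
      | none =>
          rw [mem_gs_some] at has; rw [mem_gs_none] at hat
          rcases hat with rfl | rfl
          · exact z.2.1 has.symm
          · exact z.2.2 has.symm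
      | some w =>
          rw [mem_gs_some] at has hat
          exact h (by subst has; exact congrArg some (Subtype.ext hat))

lemma image_fm_biUnion (u v : V) (S : Finset (Option {z : V // z ≠ u ∧ z ≠ v})) :
    (S.biUnion (gs u v)).image (fm u v) = S := by
  rw [Finset.biUnion_image]
  simp only [image_fm_gs]
  exact Finset.biUnion_singleton_eq_self

lemma biUnion_gs_image {u v : V} {T : Finset V}
    (hsep : (u ∈ T ∧ v ∈ T) ∨ (u ∉ T ∧ v ∉ T)) :
    (T.image (fm u v)).biUnion (gs u v) = T := by
  ext a
  simp only [mem_biUnion, mem_image]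
  constructor
  · rintro ⟨s, ⟨b, hb, rfl⟩, ha⟩
    by_cases hbuv : b ≠ u ∧ b ≠ v
    · rw [fm_of_ne hbuv, mem_gs_some] at ha; subst ha; exact hb
    · rw [fm_eq_none hbuv, mem_gs_none] at ha
      have hT : u ∈ T ∧ v ∈ T := by
        rcases hsep with h | h
        · exact h
        · exfalso
          rcases not_and_or.mp hbuv with hb' | hb' <;>
            [exact h.1 (not_not.mp hb' ▸ hb); exact h.2 (not_not.mp hb' ▸ hb)]
      rcases ha with rfl | rfl
      · exact hT.1
      · exact hT.2
  · intro ha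
    exact ⟨fm u v a, ⟨a, ha, rfl⟩, mem_gs_fm u v a⟩

/-! ### Adjacency in `interContract` -/

variable {G : SimpleGraph V} {u v : V}

lemma interContract_adj_some_some {a b : {z : V // z ≠ u ∧ z ≠ v}} :
    (interContract G u v).Adj (some a) (some b) ↔ G.Adj a.1 b.1 := by
  rw [interContract, SimpleGraph.fromRel_adj]
  constructor
  · rintro ⟨-, h | h⟩
    · exact h
    · exact h.symm
  · intro h
    exact ⟨fun hc => G.irrefl (by cases (Option.some_injective _ hc); exact h),
      Or.inl h⟩

lemma interContract_adj_some_none {a : {z : V // z ≠ u ∧ z ≠ v}} :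
    (interContract G u v).Adj (some a) none ↔ G.Adj u a.1 ∧ G.Adj v a.1 := by
  rw [interContract, SimpleGraph.fromRel_adj]
  constructor
  · rintro ⟨-, h | h⟩ <;> exact h
  · intro h
    exact ⟨by simp, Or.inl h⟩

lemma interContract_adj_none_some {b : {z : V // z ≠ u ∧ z ≠ v}} :
    (interContract G u v).Adj none (some b) ↔ G.Adj u b.1 ∧ G.Adj v b.1 := by
  rw [interContract, SimpleGraph.fromRel_adj]
  constructor
  · rintro ⟨-, h | h⟩ <;> exact h
  · intro h
    exact ⟨by simp, Or.inl h⟩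

/-! ### Separation -/

lemma sep_of {P : Finset (Finset V)} (hdisj : (P : Set (Finset V)).PairwiseDisjoint id)
    {T0 : Finset V} (hT0 : T0 ∈ P) (hu0 : u ∈ T0) (hv0 : v ∈ T0) :
    ∀ T ∈ P, (u ∈ T ∧ v ∈ T) ∨ (u ∉ T ∧ v ∉ T) := by
  intro T hT
  by_cases hTT : T = T0
  · subst hTT; exact Or.inl ⟨hu0, hv0⟩
  · right
    have hd : Disjoint T T0 := hdisj hT hT0 hTT
    exact ⟨fun h => Finset.disjoint_left.mp hd h hu0,
      fun h => Finset.disjoint_left.mp hd h hv0⟩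

section Fin
variable [Fintype V]

lemma mem_sup_iff {β γ : Type*} {s : Finset β} {f : β → Finset γ} {a : γ} :
    a ∈ s.sup f ↔ ∃ T ∈ s, a ∈ f T := Finset.mem_sup

lemma mem_cpset_iff (G : SimpleGraph V) (k : ℕ) (P : Finset (Finset V)) :
    P ∈ (partitionsInto (Finset.univ : Finset V) k).filter
        (fun P => ∀ T : Finset V, T ∈ P → G.IsClique (↑T : Set V)) ↔
      P.card = k ∧ (∀ T ∈ P, T.Nonempty) ∧
        (P : Set (Finset V)).PairwiseDisjoint id ∧ P.sup id = Finset.univ ∧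
        ∀ T : Finset V, T ∈ P → G.IsClique (↑T : Set V) := by
  simp only [partitionsInto, Finset.mem_filter, Finset.mem_univ, true_and]
  tauto

lemma k_le_card {k : ℕ} {P : Finset (Finset V)} (hcard : P.card = k)
    (hne : ∀ T ∈ P, T.Nonempty) (hdisj : (P : Set (Finset V)).PairwiseDisjoint id)
    (hsup : P.sup id = Finset.univ) : k ≤ Fintype.card V := by
  have h1 : (Finset.univ : Finset V).card = ∑ T ∈ P, T.card := by
    rw [← hsup, Finset.sup_eq_biUnion,
      Finset.card_biUnion (fun x hx y hy hxy => hdisj hx hy hxy)]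
    rfl
  have h2 : P.card ≤ ∑ T ∈ P, T.card := by
    calc P.card = ∑ _T ∈ P, 1 := by simp
    _ ≤ ∑ T ∈ P, T.card := Finset.sum_le_sum fun T hT => Finset.card_pos.mpr (hne T hT)
  rw [← hcard]
  calc P.card ≤ _ := h2
  _ = (Finset.univ : Finset V).card := h1.symm
  _ = Fintype.card V := Finset.card_univ

/-! ### The bijection for partitions where `u, v` are together -/

lemma card_together (G : SimpleGraph V) (he : G.Adj u v) (k : ℕ) :
    (((partitionsInto (Finset.univ : Finset V) k).filter
        (fun P => ∀ T : Finset V, T ∈ P → G.IsClique (↑T : Set V))).filter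
        (fun P => ∃ T ∈ P, u ∈ T ∧ v ∈ T)).card
      = cliquePartCount (interContract G u v) k := by
  classical
  unfold cliquePartCount
  apply Finset.card_nbij' (fun P => P.image (fun T => T.image (fm u v)))
    (fun Q => Q.image (fun S => S.biUnion (gs u v)))
  · -- forward map lands in target
    intro P hP
    rw [Finset.mem_coe, Finset.mem_filter] at hP
    obtain ⟨hP1, T0, hT0, hu0, hv0⟩ := hP
    rw [mem_cpset_iff] at hP1
    obtain ⟨hcard, hne, hdisj, hsup, hclq⟩ := hP1
    have hsep := sep_of (u := u) (v := v) hdisj hT0 hu0 hv0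
    have hinv : ∀ T ∈ P, (T.image (fm u v)).biUnion (gs u v) = T :=
      fun T hT => biUnion_gs_image (hsep T hT)
    rw [Finset.mem_coe, mem_cpset_iff]
    refine ⟨?_, ?_, ?_, ?_, ?_⟩
    · rw [Finset.card_image_of_injOn, hcard]
      intro T1 h1 T2 h2 hEq
      have hEq' : T1.image (fm u v) = T2.image (fm u v) := hEq
      rw [← hinv T1 (Finset.mem_coe.mp h1), ← hinv T2 (Finset.mem_coe.mp h2), hEq']
    · rintro S hS
      rw [Finset.mem_image] at hS; obtain ⟨T, hT, rfl⟩ := hS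
      exact (hne T hT).image _
    · intro S1 h1 S2 h2 h12
      rw [Finset.mem_coe, Finset.mem_image] at h1 h2
      obtain ⟨T1, hT1, rfl⟩ := h1; obtain ⟨T2, hT2, rfl⟩ := h2
      have hT12 : T1 ≠ T2 := fun h => h12 (by rw [h])
      simp only [Function.onFun, id_eq]
      rw [Finset.disjoint_left]
      intro s hs1 hs2
      have hsub1 : gs u v s ⊆ T1 := by
        rw [← hinv T1 hT1]; exact Finset.subset_biUnion_of_mem _ hs1
      have hsub2 : gs u v s ⊆ T2 := by
        rw [← hinv T2 hT2]; exact Finset.subset_biUnion_of_mem _ hs2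
      obtain ⟨a, ha⟩ := gs_nonempty u v s
      exact Finset.disjoint_left.mp (hdisj hT1 hT2 hT12) (hsub1 ha) (hsub2 ha)
    · rw [Finset.eq_univ_iff_forall]
      intro s
      obtain ⟨a, ha⟩ : ∃ a, fm u v a = s := by
        cases s with
        | none => exact ⟨u, fm_eq_none (by simp)⟩
        | some z => exact ⟨z.1, fm_of_ne z.2⟩
      obtain ⟨T, hT, haT⟩ := mem_sup_iff.mp (Finset.eq_univ_iff_forall.mp hsup a)
      rw [mem_sup_iff]
      refine ⟨T.image (fm u v), Finset.mem_image_of_mem _ hT, ?_⟩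
      rw [← ha]
      exact Finset.mem_image_of_mem _ haT
    · intro S hS
      rw [Finset.mem_image] at hS; obtain ⟨T, hT, rfl⟩ := hS
      rw [SimpleGraph.isClique_iff]
      rintro s hs t ht hst
      rw [Finset.mem_coe, Finset.mem_image] at hs ht
      obtain ⟨a, haT, rfl⟩ := hs; obtain ⟨b, hbT, rfl⟩ := ht
      have hclqT := hclq T hT
      rw [SimpleGraph.isClique_iff] at hclqT
      by_cases hau : a ≠ u ∧ a ≠ v
      · by_cases hbu : b ≠ u ∧ b ≠ v
        · rw [fm_of_ne hau, fm_of_ne hbu] at hst ⊢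
          rw [interContract_adj_some_some]
          exact hclqT haT hbT (fun h => hst (congrArg some (Subtype.ext h)))
        · rw [fm_of_ne hau, fm_eq_none hbu] at hst ⊢
          rw [interContract_adj_some_none]
          have huvT : u ∈ T ∧ v ∈ T := by
            rcases hsep T hT with h | h
            · exact h
            · exfalso
              rcases not_and_or.mp hbu with hb' | hb' <;>
                [exact h.1 (not_not.mp hb' ▸ hbT); exact h.2 (not_not.mp hb' ▸ hbT)]
          exact ⟨hclqT huvT.1 haT (fun h => hau.1 h.symm),
            hclqT huvT.2 haT (fun h => hau.2 h.symm)⟩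
      · by_cases hbu : b ≠ u ∧ b ≠ v
        · rw [fm_eq_none hau, fm_of_ne hbu] at hst ⊢
          rw [interContract_adj_none_some]
          have huvT : u ∈ T ∧ v ∈ T := by
            rcases hsep T hT with h | h
            · exact h
            · exfalso
              rcases not_and_or.mp hau with ha' | ha' <;>
                [exact h.1 (not_not.mp ha' ▸ haT); exact h.2 (not_not.mp ha' ▸ haT)]
          exact ⟨hclqT huvT.1 hbT (fun h => hbu.1 h.symm),
            hclqT huvT.2 hbT (fun h => hbu.2 h.symm)⟩
        · exfalso
          rw [fm_eq_none hau, fm_eq_none hbu] at hst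
          exact hst rfl
  · -- backward map lands in source
    intro Q hQ
    rw [Finset.mem_coe, mem_cpset_iff] at hQ
    obtain ⟨hcard, hne, hdisj, hsup, hclq⟩ := hQ
    have hinj : Function.Injective
        (fun S : Finset (Option {z : V // z ≠ u ∧ z ≠ v}) => S.biUnion (gs u v)) := by
      intro S1 S2 h
      have h2 := congrArg (Finset.image (fm u v)) h
      rwa [image_fm_biUnion, image_fm_biUnion] at h2
    rw [Finset.mem_coe, Finset.mem_filter, mem_cpset_iff]
    refine ⟨⟨?_, ?_, ?_, ?_, ?_⟩, ?_⟩
    · rw [Finset.card_image_of_injective _ hinj, hcard]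
    · rintro T hT
      rw [Finset.mem_image] at hT; obtain ⟨S, hS, rfl⟩ := hT
      obtain ⟨s, hs⟩ := hne S hS
      obtain ⟨a, ha⟩ := gs_nonempty u v s
      exact ⟨a, Finset.mem_biUnion.mpr ⟨s, hs, ha⟩⟩
    · intro T1 h1 T2 h2 h12
      rw [Finset.mem_coe, Finset.mem_image] at h1 h2
      obtain ⟨S1, hS1, rfl⟩ := h1; obtain ⟨S2, hS2, rfl⟩ := h2
      have hS12 : S1 ≠ S2 := fun h => h12 (by rw [h])
      simp only [Function.onFun, id_eq]
      rw [Finset.disjoint_left]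
      intro a ha1 ha2
      rw [Finset.mem_biUnion] at ha1 ha2
      obtain ⟨s1, hs1, ha1⟩ := ha1; obtain ⟨s2, hs2, ha2⟩ := ha2
      have hss : s1 ≠ s2 := fun h =>
        Finset.disjoint_left.mp (hdisj hS1 hS2 hS12) hs1 (h ▸ hs2)
      exact Finset.disjoint_left.mp (gs_disjoint hss) ha1 ha2
    · rw [Finset.eq_univ_iff_forall]
      intro a
      have h0 := Finset.eq_univ_iff_forall.mp hsup
      have h1 := h0 (fm u v a)
      rw [mem_sup_iff] at h1
      obtain ⟨S, hS, hfs⟩ := h1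
      rw [mem_sup_iff]
      exact ⟨S.biUnion (gs u v), Finset.mem_image_of_mem _ hS,
        Finset.mem_biUnion.mpr ⟨_, hfs, mem_gs_fm u v a⟩⟩
    · intro T hT
      rw [Finset.mem_image] at hT; obtain ⟨S, hS, rfl⟩ := hT
      rw [SimpleGraph.isClique_iff]
      intro a ha b hb hab
      rw [Finset.mem_coe, Finset.mem_biUnion] at ha hb
      obtain ⟨s, hsS, has⟩ := ha; obtain ⟨t, htS, hbt⟩ := hb
      by_cases hstq : s = t
      · subst hstq
        cases s with
        | some z =>
            rw [mem_gs_some] at has hbt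
            exact absurd (has.trans hbt.symm) hab
        | none =>
            rw [mem_gs_none] at has hbt
            rcases has with rfl | rfl <;> rcases hbt with rfl | rfl
            · exact absurd rfl hab
            · exact he
            · exact he.symm
            · exact absurd rfl hab
      · have hclqS := hclq S hS
        rw [SimpleGraph.isClique_iff] at hclqS
        have hadj := hclqS hsS htS hstq
        cases s with
        | none =>
            cases t with
            | none => exact absurd rfl hstq
            | some z =>
                rw [mem_gs_none] at has; rw [mem_gs_some] at hbt
                rw [interContract_adj_none_some] at hadj
                subst hbt
                rcases has with rfl | rfl
                · exact hadj.1
                · exact hadj.2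
        | some z =>
            cases t with
            | none =>
                rw [mem_gs_some] at has; rw [mem_gs_none] at hbt
                rw [interContract_adj_some_none] at hadj
                subst has
                rcases hbt with rfl | rfl
                · exact hadj.1.symm
                · exact hadj.2.symm
            | some w =>
                rw [mem_gs_some] at has hbt
                rw [interContract_adj_some_some] at hadj
                subst has; subst hbt
                exact hadj
    · have h0 := Finset.eq_univ_iff_forall.mp hsup
      have h1 := h0 none
      rw [mem_sup_iff] at h1
      obtain ⟨S, hS, hnS⟩ := h1
      refine ⟨S.biUnion (gs u v), Finset.mem_image_of_mem _ hS, ?_, ?_⟩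
      · exact Finset.mem_biUnion.mpr ⟨none, hnS, mem_gs_none.mpr (Or.inl rfl)⟩
      · exact Finset.mem_biUnion.mpr ⟨none, hnS, mem_gs_none.mpr (Or.inr rfl)⟩
  · -- left inverse
    intro P hP
    rw [Finset.mem_coe, Finset.mem_filter] at hP
    obtain ⟨hP1, T0, hT0, hu0, hv0⟩ := hP
    rw [mem_cpset_iff] at hP1
    obtain ⟨-, -, hdisj, -, -⟩ := hP1
    have hsep := sep_of (u := u) (v := v) hdisj hT0 hu0 hv0
    beta_reduce
    rw [Finset.image_image]
    calc P.image _ = P.image id :=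
      Finset.image_congr (fun T hT => biUnion_gs_image (hsep T hT))
    _ = P := Finset.image_id
  · -- right inverse
    intro Q _
    beta_reduce
    rw [Finset.image_image]
    calc Q.image _ = Q.image id :=
      Finset.image_congr (fun S _ => image_fm_biUnion u v S)
    _ = Q := Finset.image_id


/-! ### Partitions separating `u` and `v` are clique partitions of `G - e` -/

lemma filter_separate_eq (G : SimpleGraph V) (he : G.Adj u v) (k : ℕ) :
    ((partitionsInto (Finset.univ : Finset V) k).filter
        (fun P => ∀ T : Finset V, T ∈ P → G.IsClique (↑T : Set V))).filter
        (fun P => ¬ ∃ T ∈ P, u ∈ T ∧ v ∈ T)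
      = (partitionsInto (Finset.univ : Finset V) k).filter
        (fun P => ∀ T : Finset V, T ∈ P →
          (G.deleteEdges {s(u, v)}).IsClique (↑T : Set V)) := by
  ext P
  have hR : P ∈ (partitionsInto (Finset.univ : Finset V) k).filter
        (fun P => ∀ T : Finset V, T ∈ P → (G.deleteEdges {s(u, v)}).IsClique (↑T : Set V)) ↔
      P.card = k ∧ (∀ T ∈ P, T.Nonempty) ∧
        (P : Set (Finset V)).PairwiseDisjoint id ∧ P.sup id = Finset.univ ∧
        ∀ T : Finset V, T ∈ P → (G.deleteEdges {s(u, v)}).IsClique (↑T : Set V) := by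
    simp only [partitionsInto, Finset.mem_filter, Finset.mem_univ, true_and]
    tauto
  rw [Finset.mem_filter, mem_cpset_iff, hR]
  constructor
  · rintro ⟨⟨h1, h2, h3, h4, hclq⟩, hnot⟩
    refine ⟨h1, h2, h3, h4, ?_⟩
    intro T hT
    have hc := hclq T hT
    rw [SimpleGraph.isClique_iff] at hc ⊢
    intro a ha b hb hab
    rw [SimpleGraph.deleteEdges_adj]
    refine ⟨hc ha hb hab, ?_⟩
    rw [Set.mem_singleton_iff, Sym2.eq_iff]
    rintro (⟨rfl, rfl⟩ | ⟨rfl, rfl⟩)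
    · exact hnot ⟨T, hT, ha, hb⟩
    · exact hnot ⟨T, hT, hb, ha⟩
  · rintro ⟨h1, h2, h3, h4, hclq⟩
    refine ⟨⟨h1, h2, h3, h4, fun T hT =>
      (hclq T hT).mono (SimpleGraph.deleteEdges_le _)⟩, ?_⟩
    rintro ⟨T, hT, hu, hv⟩
    have hcl := hclq T hT
    rw [SimpleGraph.isClique_iff] at hcl
    have h5 := hcl hu hv he.ne
    rw [SimpleGraph.deleteEdges_adj] at h5
    exact h5.2 rfl

lemma count_split (G : SimpleGraph V) (he : G.Adj u v) (k : ℕ) :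
    cliquePartCount G k
      = cliquePartCount (G.deleteEdges {s(u, v)}) k
        + cliquePartCount (interContract G u v) k := by
  classical
  rw [cliquePartCount, ← Finset.card_filter_add_card_filter_not
    (p := fun P => ∃ T ∈ P, u ∈ T ∧ v ∈ T)]
  rw [card_together G he k, filter_separate_eq G he k]
  rw [Nat.add_comm]
  unfold cliquePartCount
  congr

lemma cliquePartCount_eq_zero {H : SimpleGraph V} {k : ℕ}
    (h : Fintype.card V < k) : cliquePartCount H k = 0 := by
  rw [cliquePartCount, Finset.card_eq_zero, Finset.eq_empty_iff_forall_notMem]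
  intro P hP
  rw [mem_cpset_iff] at hP
  obtain ⟨h1, h2, h3, h4, -⟩ := hP
  exact absurd (k_le_card h1 h2 h3 h4) (Nat.not_le.mpr h)

end Fin

lemma card_option_subtype [Fintype V] (he : u ≠ v) :
    Fintype.card (Option {z : V // z ≠ u ∧ z ≠ v}) = Fintype.card V - 1 := by
  classical
  have h2 : 2 ≤ Fintype.card V := Fintype.one_lt_card_iff_nontrivial.mpr ⟨⟨u, v, he⟩⟩
  rw [Fintype.card_option, Fintype.card_subtype]
  have : (Finset.univ.filter fun z : V => z ≠ u ∧ z ≠ v)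
      = Finset.univ \ {u, v} := by
    ext z; simp [not_or]
  rw [this, Finset.card_sdiff_of_subset (Finset.subset_univ _), Finset.card_univ]
  have hcuv : ({u, v} : Finset V).card = 2 := by
    rw [Finset.card_insert_of_notMem (by simpa using he), Finset.card_singleton]
  rw [hcuv]
  omega

end AdjointAux

/-- the adjoint polynomial satisfies the recursion
`h(G,x) = h(G-e,x) - h(G∩e,x)` for any edge `e = {u,v}`. -/
theorem adjointPoly_recursion {V : Type*} [Fintype V] (G : SimpleGraph V) (u v : V)
    (he : G.Adj u v) (x : ℂ) :
    adjointPoly G x = adjointPoly (G.deleteEdges {s(u, v)}) x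
      - adjointPoly (interContract G u v) x := by
  classical
  have hne : u ≠ v := he.ne
  have h2 : 2 ≤ Fintype.card V := Fintype.one_lt_card_iff_nontrivial.mpr ⟨⟨u, v, hne⟩⟩
  have hcard : Fintype.card (Option {z : V // z ≠ u ∧ z ≠ v}) = Fintype.card V - 1 :=
    AdjointAux.card_option_subtype hne
  have hB : ∀ k ∈ Finset.range (Fintype.card V + 1),
      (-1 : ℂ) ^ (Fintype.card V - k) * (cliquePartCount G k : ℂ) * x ^ k
        = (-1 : ℂ) ^ (Fintype.card V - k)
            * (cliquePartCount (G.deleteEdges {s(u, v)}) k : ℂ) * x ^ k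
          + (-1 : ℂ) ^ (Fintype.card V - k)
            * (cliquePartCount (interContract G u v) k : ℂ) * x ^ k := by
    intro k _
    rw [AdjointAux.count_split G he k]
    push_cast
    ring
  rw [adjointPoly, adjointPoly, adjointPoly, Finset.sum_congr rfl hB,
    Finset.sum_add_distrib, sub_eq_add_neg]
  congr 1
  rw [hcard]
  have hr : Fintype.card V - 1 + 1 = Fintype.card V := by omega
  rw [hr]
  have hzero : cliquePartCount (interContract G u v) (Fintype.card V) = 0 :=
    AdjointAux.cliquePartCount_eq_zero (by rw [hcard]; omega)
  rw [Finset.sum_range_succ, hzero]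
  rw [Nat.cast_zero, mul_zero, zero_mul, add_zero]
  rw [← Finset.sum_neg_distrib]
  apply Finset.sum_congr rfl
  intro k hk
  rw [Finset.mem_range] at hk
  have hexp : Fintype.card V - k = (Fintype.card V - 1 - k) + 1 := by omega
  rw [hexp, pow_succ]
  ring
end
end
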